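/- Let u, v ∈ ℂⁿ (n ≥ 2), where v has pairwise distinct coordinates, let 1 ≤ p ≤ ∞ with conjugate exponent q. Then for all indices i ≠ j, |uᵢ - uⱼ| ≥ (1 - 2^{1/q} ‖(u - v)/d(v)‖_p) |vᵢ - vⱼ|, where d(v)ᵢ = min_{j ≠ i} |vᵢ - vⱼ|. -/

import Mathlib

open scoped ENNReal NNReal

noncomputable def pnorm (p : ℝ≥0∞) {n : ℕ} (w : Fin n → ℝ) : ℝ :=
  ‖(WithLp.equiv p (Fin n → ℝ)).symm w‖

noncomputable def dmin {n : ℕ} (v : Fin n → ℂ) (i : Fin n) : ℝ :=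
  ⨅ j : {j : Fin n // j ≠ i}, ‖v i - v j.1‖

lemma two_term_rpow_ineq {a b P : ℝ} (ha : 0 ≤ a) (hb : 0 ≤ b) (hP : 1 ≤ P) :
    a + b ≤ 2 ^ (1 - 1/P) * (a ^ P + b ^ P) ^ (1/P) := by
  have hP0 : (0:ℝ) < P := lt_of_lt_of_le one_pos hP
  lift a to ℝ≥0 using ha
  lift b to ℝ≥0 using hb
  have key : ((a:ℝ) + b) ^ P ≤ 2 ^ (P - 1) * ((a:ℝ) ^ P + (b:ℝ) ^ P) := by
    exact_mod_cast NNReal.rpow_add_le_mul_rpow_add_rpow a b hP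
  have h1 : ((a:ℝ) + b) = (((a:ℝ) + b) ^ P) ^ (1/P) := by
    rw [one_div, Real.rpow_rpow_inv (by positivity) hP0.ne']
  calc ((a:ℝ) + b) = (((a:ℝ) + b) ^ P) ^ (1/P) := h1
    _ ≤ (2 ^ (P - 1) * ((a:ℝ) ^ P + (b:ℝ) ^ P)) ^ (1/P) :=
        Real.rpow_le_rpow (by positivity) key (by positivity)
    _ = (2 ^ (P - 1)) ^ (1/P) * ((a:ℝ) ^ P + (b:ℝ) ^ P) ^ (1/P) :=
        Real.mul_rpow (by positivity) (by positivity)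
    _ = 2 ^ (1 - 1/P) * ((a:ℝ) ^ P + (b:ℝ) ^ P) ^ (1/P) := by
        rw [← Real.rpow_mul (by norm_num), mul_one_div, sub_div, div_self hP0.ne']

theorem u_v_inequality_basic_2 (n : ℕ) (hn : 2 ≤ n) (u v : Fin n → ℂ)
    (hv : Function.Injective v) (p q : ℝ≥0∞) (hp : 1 ≤ p) (hpq : 1/p + 1/q = 1) :
    ∀ i j : Fin n, i ≠ j →
      (1 - (2:ℝ) ^ (1/q).toReal * pnorm p (fun k => ‖u k - v k‖ / dmin v k))
          * ‖v i - v j‖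
        ≤ ‖u i - u j‖ := by
  intro i j hij
  haveI : Fact (1 ≤ p) := ⟨hp⟩
  set W : Fin n → ℝ := fun k => ‖u k - v k‖ / dmin v k with hWdef
  set M : ℝ := pnorm p W with hMdef
  have hne : ∀ k : Fin n, Nonempty {j : Fin n // j ≠ k} := by
    intro k
    obtain ⟨m, hm⟩ := Fintype.exists_ne_of_one_lt_card (by rw [Fintype.card_fin]; omega) k
    exact ⟨⟨m, hm⟩⟩
  have hdpos : ∀ k, 0 < dmin v k := by
    intro k
    have := hne k
    obtain ⟨m, hm⟩ := Finite.exists_min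
      (fun j : {j : Fin n // j ≠ k} => ‖v k - v j.1‖)
    refine lt_of_lt_of_le ?_ (le_ciInf hm)
    have hvne : v k ≠ v m.1 := fun h => m.2 (hv h.symm)
    simpa [norm_pos_iff, sub_eq_zero] using hvne
  have hW : ∀ k, 0 ≤ W k := fun k => div_nonneg (norm_nonneg _) (hdpos k).le
  have hdle : ∀ k l : Fin n, l ≠ k → dmin v k ≤ ‖v k - v l‖ := by
    intro k l hlk
    exact ciInf_le (f := fun j : {j : Fin n // j ≠ k} => ‖v k - v j.1‖)
      (Set.Finite.bddBelow (Set.finite_range _)) ⟨l, hlk⟩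
  -- key Hölder-type bound
  have hC : W i + W j ≤ 2 ^ ((1/q).toReal) * M := by
    rcases eq_or_ne p ∞ with rfl | hpt
    · have hq : 1/q = 1 := by simpa using hpq
      rw [hq]
      have hk : ∀ k, W k ≤ M := by
        intro k
        have hb : BddAbove (Set.range fun k =>
            ‖((WithLp.equiv ⊤ (Fin n → ℝ)).symm W) k‖) :=
          Set.Finite.bddAbove (Set.finite_range _)
        have h := le_ciSup hb k
        rw [hMdef, pnorm, PiLp.norm_eq_ciSup]
        exact le_trans (by simpa [WithLp.equiv_symm_apply, PiLp.toLp_apply] using le_abs_self (W k)) h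
      have h2 : (2:ℝ) ^ (1:ℝ≥0∞).toReal = 2 := by simp
      rw [h2]
      linarith [hk i, hk j]
    · have hp0 : p ≠ 0 := (lt_of_lt_of_le one_pos hp).ne'
      have hP : 1 ≤ p.toReal := by
        rw [← ENNReal.toReal_one]; exact ENNReal.toReal_mono hpt hp
      have hP0 : (0:ℝ) < p.toReal := lt_of_lt_of_le one_pos hP
      have h1p_le : 1/p ≤ 1 := by
        conv_rhs => rw [← hpq]
        exact le_self_add
      have hq1 : 1/q = 1 - 1/p :=
        ENNReal.eq_sub_of_add_eq (by simp [hp0]) (by rw [add_comm]; exact hpq)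
      have hqt : (1/q).toReal = 1 - 1/p.toReal := by
        rw [hq1, ENNReal.toReal_sub_of_le h1p_le (by simp), one_div, ENNReal.toReal_inv,
          ENNReal.toReal_one, one_div]
      have hnorm : M = (∑ k, W k ^ p.toReal) ^ (1/p.toReal) := by
        rw [hMdef, pnorm, PiLp.norm_eq_sum hP0]
        congr 1
        refine Finset.sum_congr rfl fun k _ => ?_
        rw [WithLp.equiv_symm_apply, PiLp.toLp_apply, Real.norm_of_nonneg (hW k)]
      have hsum : W i ^ p.toReal + W j ^ p.toReal ≤ M ^ p.toReal := by
        rw [hnorm, one_div, Real.rpow_inv_rpow (Finset.sum_nonneg fun k _ => Real.rpow_nonneg (hW k) _)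
          hP0.ne']
        calc W i ^ p.toReal + W j ^ p.toReal
            = ∑ k ∈ ({i, j} : Finset (Fin n)), W k ^ p.toReal := by
              rw [Finset.sum_pair hij]
          _ ≤ ∑ k, W k ^ p.toReal :=
              Finset.sum_le_sum_of_subset_of_nonneg (Finset.subset_univ _)
                (fun k _ _ => Real.rpow_nonneg (hW k) _)
      have hM0 : 0 ≤ M := by rw [hMdef, pnorm]; exact norm_nonneg ((WithLp.equiv p (Fin n → ℝ)).symm W)
      calc W i + W j
          ≤ 2 ^ (1 - 1/p.toReal) * (W i ^ p.toReal + W j ^ p.toReal) ^ (1/p.toReal) :=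
            two_term_rpow_ineq (hW i) (hW j) hP
        _ ≤ 2 ^ (1 - 1/p.toReal) * (M ^ p.toReal) ^ (1/p.toReal) := by
            refine mul_le_mul_of_nonneg_left ?_ (by positivity)
            exact Real.rpow_le_rpow
              (add_nonneg (Real.rpow_nonneg (hW i) _) (Real.rpow_nonneg (hW j) _)) hsum
              (by positivity)
        _ = 2 ^ ((1/q).toReal) * M := by
            rw [hqt, one_div, Real.rpow_rpow_inv hM0 hP0.ne']
  -- coordinate bounds
  have hbi : ‖u i - v i‖ ≤ W i * ‖v i - v j‖ := by
    have h1 : ‖u i - v i‖ = W i * dmin v i :=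
      (div_mul_cancel₀ _ (hdpos i).ne').symm
    rw [h1]
    exact mul_le_mul_of_nonneg_left (hdle i j (Ne.symm hij)) (hW i)
  have hbj : ‖u j - v j‖ ≤ W j * ‖v i - v j‖ := by
    have h1 : ‖u j - v j‖ = W j * dmin v j :=
      (div_mul_cancel₀ _ (hdpos j).ne').symm
    have h2 : ‖v j - v i‖ = ‖v i - v j‖ := norm_sub_rev _ _
    rw [h1, ← h2]
    exact mul_le_mul_of_nonneg_left (hdle j i hij) (hW j)
  have htri : ‖v i - v j‖ ≤
      ‖u i - v i‖ + ‖u i - u j‖ + ‖u j - v j‖ := by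
    have he : v i - v j = (v i - u i) + (u i - u j) + (u j - v j) := by ring
    calc ‖v i - v j‖
        ≤ ‖(v i - u i) + (u i - u j)‖ + ‖u j - v j‖ := by
          rw [he]; exact norm_add_le _ _
      _ ≤ ‖v i - u i‖ + ‖u i - u j‖ + ‖u j - v j‖ := by
          gcongr; exact norm_add_le _ _
      _ = _ := by rw [norm_sub_rev (v i) (u i)]
  have habs : (0:ℝ) ≤ ‖v i - v j‖ := norm_nonneg _
  have hstep : (1 - 2 ^ ((1/q).toReal) * M) * ‖v i - v j‖
      ≤ (1 - (W i + W j)) * ‖v i - v j‖ := by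
    apply mul_le_mul_of_nonneg_right _ habs
    linarith
  refine le_trans hstep ?_
  have hexp : (1 - (W i + W j)) * ‖v i - v j‖
      = ‖v i - v j‖ - W i * ‖v i - v j‖
        - W j * ‖v i - v j‖ := by ring
  rw [hexp]
  linarith
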